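/- In the two-dimensional yarmulke Morse geometry, write Z = √(ζ−1) and let q = (a,0) with 0 < a < ε. Then the chronological past of q is the open heart-shaped region bounded by the two past-directed null spirals from q: I⁻(q) = {p ∈ N : |p| < a e^{−|φ_p|/Z}}, where φ_p ∈ (−π, π] is the angle of p (i.e. p = |p|(cos φ_p, sin φ_p)). -/

import Mathlib

noncomputable section

open Set

/-- The punctured disc `N = {p : 0 < |p| < ε}` (Euclidean norm). -/
def NY (ε : ℝ) : Set (ℝ × ℝ) :=
  {p | 0 < p.1 ^ 2 + p.2 ^ 2 ∧ p.1 ^ 2 + p.2 ^ 2 < ε ^ 2}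

/-- Euclidean dot product on ℝ². -/
def dot2 (a b : ℝ × ℝ) : ℝ := a.1 * b.1 + a.2 * b.2

/-- Planar cross product `p × w = p₁w₂ − p₂w₁`. -/
def cross2 (a b : ℝ × ℝ) : ℝ := a.1 * b.2 - a.2 * b.1

/-- The yarmulke Morse metric (quadratic form) built from `f(p) = |p|²`:
`g_p(w,w) = 4|p|²|w|² − 4ζ(p·w)²`. -/
def gY (ζ : ℝ) (p w : ℝ × ℝ) : ℝ :=
  4 * dot2 p p * dot2 w w - 4 * ζ * dot2 p w ^ 2

/-- A future-directed timelike curve: a C¹ curve in `N` with everywhere timelike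
tangent satisfying the future-pointing condition `γ(t)·γ'(t) > 0`. -/
def TimelikeY (ζ ε : ℝ) (γ γ' : ℝ → ℝ × ℝ) : Prop :=
  (∀ t ∈ Icc (0 : ℝ) 1, HasDerivAt γ (γ' t) t) ∧
  ContinuousOn γ' (Icc (0 : ℝ) 1) ∧
  (∀ t ∈ Icc (0 : ℝ) 1, γ t ∈ NY ε) ∧
  (∀ t ∈ Icc (0 : ℝ) 1, gY ζ (γ t) (γ' t) < 0) ∧
  (∀ t ∈ Icc (0 : ℝ) 1, 0 < dot2 (γ t) (γ' t))

/-- The chronology relation `q ≪ p`. -/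
def chronY (ζ ε : ℝ) (q p : ℝ × ℝ) : Prop :=
  ∃ γ γ', TimelikeY ζ ε γ γ' ∧ γ 0 = q ∧ γ 1 = p

def IplusY (ζ ε : ℝ) (q : ℝ × ℝ) : Set (ℝ × ℝ) := {p ∈ NY ε | chronY ζ ε q p}

def IminusY (ζ ε : ℝ) (q : ℝ × ℝ) : Set (ℝ × ℝ) := {p ∈ NY ε | chronY ζ ε p q}

/-- The angle `φ_p ∈ (−π, π]` of a point of the plane. -/
def ang (p : ℝ × ℝ) : ℝ := Complex.arg ((p.1 : ℂ) + (p.2 : ℂ) * Complex.I)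

set_option maxHeartbeats 1000000

namespace Stmt7Aux

lemma fstDeriv {f : ℝ → ℝ × ℝ} {f' : ℝ × ℝ} {t : ℝ} (h : HasDerivAt f f' t) :
    HasDerivAt (fun s => (f s).1) f'.1 t :=
  (ContinuousLinearMap.fst ℝ ℝ ℝ).hasFDerivAt.comp_hasDerivAt t h

lemma sndDeriv {f : ℝ → ℝ × ℝ} {f' : ℝ × ℝ} {t : ℝ} (h : HasDerivAt f f' t) :
    HasDerivAt (fun s => (f s).2) f'.2 t :=
  (ContinuousLinearMap.snd ℝ ℝ ℝ).hasFDerivAt.comp_hasDerivAt t h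

lemma polar (p : ℝ × ℝ) (hp : 0 < p.1 ^ 2 + p.2 ^ 2) :
    p.1 = Real.sqrt (p.1 ^ 2 + p.2 ^ 2) * Real.cos (ang p) ∧
    p.2 = Real.sqrt (p.1 ^ 2 + p.2 ^ 2) * Real.sin (ang p) := by
  set z : ℂ := (p.1 : ℂ) + (p.2 : ℂ) * Complex.I with hzdef
  have hre : z.re = p.1 := by simp [hzdef]
  have him : z.im = p.2 := by simp [hzdef]
  have hz : z ≠ 0 := by
    intro h
    rw [h] at hre him
    simp at hre him
    rw [← hre, ← him] at hp
    norm_num at hp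
  have habs : ‖z‖ = Real.sqrt (p.1 ^ 2 + p.2 ^ 2) := by
    rw [Complex.norm_def, Complex.normSq_apply, hre, him]
    ring_nf
  have hcos := Complex.cos_arg hz
  have hsin := Complex.sin_arg z
  have habs0 : ‖z‖ ≠ 0 := by
    exact norm_ne_zero_iff.mpr hz
  constructor
  · rw [ang, ← hzdef, ← habs, hcos, hre]; field_simp
  · rw [ang, ← hzdef, ← habs, hsin, him]; field_simp

lemma gY_polar (ζ ρ c' φ' C S : ℝ) (h : S ^ 2 + C ^ 2 = 1) :
    gY ζ (ρ * C, ρ * S) (ρ * (c' * C + φ' * S), ρ * (c' * S - φ' * C)) =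
      4 * ρ ^ 4 * (φ' ^ 2 - (ζ - 1) * c' ^ 2) := by
  simp only [gY, dot2]
  linear_combination (4 * ρ ^ 4 * (c' ^ 2 + φ' ^ 2 - ζ * c' ^ 2) * (S ^ 2 + C ^ 2 + 1)) * h

lemma dot_polar (ρ c' φ' C S : ℝ) (h : S ^ 2 + C ^ 2 = 1) :
    dot2 (ρ * C, ρ * S) (ρ * (c' * C + φ' * S), ρ * (c' * S - φ' * C)) = ρ ^ 2 * c' := by
  simp only [dot2]
  linear_combination (ρ ^ 2 * c') * h

lemma curveDeriv (r c φ t : ℝ) :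
    HasDerivAt (fun s => (r * Real.exp (c * s) * Real.cos (φ - φ * s),
                          r * Real.exp (c * s) * Real.sin (φ - φ * s)))
      (r * Real.exp (c * t) * (c * Real.cos (φ - φ * t) + φ * Real.sin (φ - φ * t)),
       r * Real.exp (c * t) * (c * Real.sin (φ - φ * t) - φ * Real.cos (φ - φ * t))) t := by
  have hρd : HasDerivAt (fun s : ℝ => r * Real.exp (c * s)) (r * Real.exp (c * t) * c) t := by
    have h1 : HasDerivAt (fun s : ℝ => c * s) c t := by
      simpa using (hasDerivAt_id t).const_mul c
    have h2 := (Real.hasDerivAt_exp (c * t)).comp t h1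
    have h3 := h2.const_mul r
    have : r * (Real.exp (c * t) * c) = r * Real.exp (c * t) * c := by ring
    rw [this] at h3
    exact h3
  have hθd : HasDerivAt (fun s : ℝ => φ - φ * s) (-φ) t := by
    have h1 : HasDerivAt (fun s : ℝ => φ * s) φ t := by
      simpa using (hasDerivAt_id t).const_mul φ
    have h2 := (hasDerivAt_const t φ).sub h1; rw [zero_sub] at h2; exact h2
  have hC := (Real.hasDerivAt_cos (φ - φ * t)).comp t hθd
  have hS := (Real.hasDerivAt_sin (φ - φ * t)).comp t hθd
  have h1 := hρd.mul hC
  have h2 := hρd.mul hS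
  have h := h1.prodMk h2
  simp only [Function.comp] at h
  exact h.congr_deriv (by rw [Prod.mk.injEq]; constructor <;> ring)

lemma construct (ζ ε a : ℝ) (hζ : 1 < ζ) (hε : 0 < ε) (ha : 0 < a) (haε : a < ε)
    (p : ℝ × ℝ) (hpN : p ∈ NY ε)
    (hlt : Real.sqrt (p.1 ^ 2 + p.2 ^ 2) < a * Real.exp (-|ang p| / Real.sqrt (ζ - 1))) :
    ∃ γ γ' : ℝ → ℝ × ℝ,
      ((∀ t ∈ Icc (0 : ℝ) 1, HasDerivAt γ (γ' t) t) ∧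
       ContinuousOn γ' (Icc (0 : ℝ) 1) ∧
       (∀ t ∈ Icc (0 : ℝ) 1, γ t ∈ NY ε) ∧
       (∀ t ∈ Icc (0 : ℝ) 1, gY ζ (γ t) (γ' t) < 0) ∧
       (∀ t ∈ Icc (0 : ℝ) 1, 0 < dot2 (γ t) (γ' t))) ∧ γ 0 = p ∧ γ 1 = (a, 0) := by
  obtain ⟨hp0, hpε⟩ := hpN
  obtain ⟨Z, hZdef⟩ : ∃ Z : ℝ, Z = Real.sqrt (ζ - 1) := ⟨_, rfl⟩
  have hZ : 0 < Z := hZdef ▸ Real.sqrt_pos.2 (by linarith)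
  have hZ2 : Z ^ 2 = ζ - 1 := hZdef ▸ Real.sq_sqrt (by linarith)
  obtain ⟨r, hrdef⟩ : ∃ r : ℝ, r = Real.sqrt (p.1 ^ 2 + p.2 ^ 2) := ⟨_, rfl⟩
  have hr : 0 < r := hrdef ▸ Real.sqrt_pos.2 hp0
  obtain ⟨φ, hφdef⟩ : ∃ φ : ℝ, φ = ang p := ⟨_, rfl⟩
  have hlt' : r < a * Real.exp (-|φ| / Z) := by rw [hrdef, hφdef, hZdef]; exact hlt
  have hexp1 : Real.exp (-|φ| / Z) ≤ 1 := by
    apply Real.exp_le_one_iff.2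
    exact div_nonpos_iff.2 (Or.inr ⟨neg_nonpos.mpr (abs_nonneg φ), hZ.le⟩)
  have hra : r < a := by nlinarith
  obtain ⟨c, hcdef⟩ : ∃ c : ℝ, c = Real.log (a / r) := ⟨_, rfl⟩
  have hc : 0 < c := hcdef ▸ Real.log_pos (by rw [lt_div_iff₀ hr]; linarith)
  have hrc : r * Real.exp c = a := by
    rw [hcdef, Real.exp_log (by positivity)]; field_simp
  have hφc : |φ| < Z * c := by
    have h1 : Real.log r < Real.log (a * Real.exp (-|φ| / Z)) := Real.log_lt_log hr hlt'
    rw [Real.log_mul (ne_of_gt ha) (Real.exp_ne_zero _), Real.log_exp] at h1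
    have h2 : c = Real.log a - Real.log r := by
      rw [hcdef]; exact Real.log_div (ne_of_gt ha) (ne_of_gt hr)
    rw [neg_div] at h1
    have h3 : |φ| / Z < c := by linarith
    calc |φ| = Z * (|φ| / Z) := by field_simp
    _ < Z * c := mul_lt_mul_of_pos_left h3 hZ
  have hpx : p.1 = r * Real.cos φ := by
    rw [hrdef, hφdef]; exact (polar p hp0).1
  have hpy : p.2 = r * Real.sin φ := by
    rw [hrdef, hφdef]; exact (polar p hp0).2
  refine ⟨fun s => (r * Real.exp (c * s) * Real.cos (φ - φ * s),
                    r * Real.exp (c * s) * Real.sin (φ - φ * s)),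
    fun s => (r * Real.exp (c * s) * (c * Real.cos (φ - φ * s) + φ * Real.sin (φ - φ * s)),
              r * Real.exp (c * s) * (c * Real.sin (φ - φ * s) - φ * Real.cos (φ - φ * s))),
    ⟨fun t _ => curveDeriv r c φ t, ?_, ?_, ?_, ?_⟩, ?_, ?_⟩
  · apply Continuous.continuousOn; fun_prop
  · intro t ht
    have hρpos : 0 < r * Real.exp (c * t) := by positivity
    have hρle : r * Real.exp (c * t) ≤ a := by
      have h1 : Real.exp (c * t) ≤ Real.exp c := Real.exp_le_exp.2 (by nlinarith [ht.1, ht.2])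
      nlinarith
    have htrig := Real.sin_sq_add_cos_sq (φ - φ * t)
    have hsq : (r * Real.exp (c * t) * Real.cos (φ - φ * t)) ^ 2 +
        (r * Real.exp (c * t) * Real.sin (φ - φ * t)) ^ 2 = (r * Real.exp (c * t)) ^ 2 := by
      linear_combination (r * Real.exp (c * t)) ^ 2 * htrig
    refine ⟨?_, ?_⟩
    · show (0:ℝ) < (r * Real.exp (c * t) * Real.cos (φ - φ * t)) ^ 2 + (r * Real.exp (c * t) * Real.sin (φ - φ * t)) ^ 2
      rw [hsq]; positivity
    · show (r * Real.exp (c * t) * Real.cos (φ - φ * t)) ^ 2 + (r * Real.exp (c * t) * Real.sin (φ - φ * t)) ^ 2 < ε ^ 2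
      rw [hsq]; nlinarith
  · intro t _
    have hρpos : 0 < r * Real.exp (c * t) := by positivity
    have h := gY_polar ζ (r * Real.exp (c * t)) c φ (Real.cos (φ - φ * t))
      (Real.sin (φ - φ * t)) (Real.sin_sq_add_cos_sq _)
    beta_reduce
    rw [h]
    have hφ2 : φ ^ 2 < (ζ - 1) * c ^ 2 := by
      nlinarith [sq_abs φ, abs_nonneg φ, mul_pos hZ hc, hφc, hZ2]
    have h4 := pow_pos hρpos 4
    nlinarith [h4, hφ2]
  · intro t _
    have hρpos : 0 < r * Real.exp (c * t) := by positivity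
    have h := dot_polar (r * Real.exp (c * t)) c φ (Real.cos (φ - φ * t))
      (Real.sin (φ - φ * t)) (Real.sin_sq_add_cos_sq _)
    beta_reduce
    rw [h]
    positivity
  · show (r * Real.exp (c * 0) * Real.cos (φ - φ * 0), r * Real.exp (c * 0) * Real.sin (φ - φ * 0)) = p
    rw [Prod.ext_iff]
    constructor <;> simp [hpx, hpy]
  · show (r * Real.exp (c * 1) * Real.cos (φ - φ * 1), r * Real.exp (c * 1) * Real.sin (φ - φ * 1)) = (a, 0)
    rw [Prod.ext_iff]
    constructor <;> simp [mul_one, hrc]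


lemma forward (ζ ε a : ℝ) (hζ : 1 < ζ) (ha : 0 < a) (p : ℝ × ℝ)
    (γ γ' : ℝ → ℝ × ℝ)
    (hd : ∀ t ∈ Icc (0:ℝ) 1, HasDerivAt γ (γ' t) t)
    (hcont : ContinuousOn γ' (Icc (0:ℝ) 1))
    (hN : ∀ t ∈ Icc (0:ℝ) 1, γ t ∈ NY ε)
    (hg : ∀ t ∈ Icc (0:ℝ) 1, gY ζ (γ t) (γ' t) < 0)
    (hdot : ∀ t ∈ Icc (0:ℝ) 1, 0 < dot2 (γ t) (γ' t))
    (h0 : γ 0 = p) (h1 : γ 1 = (a, 0)) :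
    Real.sqrt (p.1 ^ 2 + p.2 ^ 2) < a * Real.exp (-|ang p| / Real.sqrt (ζ - 1)) := by
  obtain ⟨Z, hZdef⟩ : ∃ Z : ℝ, Z = Real.sqrt (ζ - 1) := ⟨_, rfl⟩
  have hZ : 0 < Z := hZdef ▸ Real.sqrt_pos.2 (by linarith)
  have hZ2 : Z ^ 2 = ζ - 1 := hZdef ▸ Real.sq_sqrt (by linarith)
  have h01 : (0:ℝ) ∈ Icc (0:ℝ) 1 := by norm_num
  have h11 : (1:ℝ) ∈ Icc (0:ℝ) 1 := by norm_num
  have hR : ∀ t ∈ Icc (0:ℝ) 1, 0 < (γ t).1 ^ 2 + (γ t).2 ^ 2 := fun t ht => (hN t ht).1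
  -- |B| < Z * A
  have hB : ∀ t ∈ Icc (0:ℝ) 1, |cross2 (γ t) (γ' t)| < Z * dot2 (γ t) (γ' t) := by
    intro t ht
    have hgt := hg t ht
    have hAt := hdot t ht
    have hRt := hR t ht
    have hkey : cross2 (γ t) (γ' t) ^ 2 < (ζ - 1) * dot2 (γ t) (γ' t) ^ 2 := by
      have hid : dot2 (γ t) (γ' t) ^ 2 + cross2 (γ t) (γ' t) ^ 2 =
          ((γ t).1 ^ 2 + (γ t).2 ^ 2) * dot2 (γ' t) (γ' t) := by
        simp only [dot2, cross2]; ring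
      have hgt' : 4 * dot2 (γ t) (γ t) * dot2 (γ' t) (γ' t)
          - 4 * ζ * dot2 (γ t) (γ' t) ^ 2 < 0 := hgt
      have hdd : dot2 (γ t) (γ t) = (γ t).1 ^ 2 + (γ t).2 ^ 2 := by
        simp only [dot2]; ring
      nlinarith [hgt', hid, hdd]
    nlinarith [sq_abs (cross2 (γ t) (γ' t)), abs_nonneg (cross2 (γ t) (γ' t)),
      mul_pos hZ hAt, hZ2, hkey]
  -- continuity of γ on Icc
  have hγc : ContinuousOn γ (Icc (0:ℝ) 1) :=
    fun t ht => (hd t ht).continuousAt.continuousWithinAt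
  -- continuity of B/R on Icc
  have hBRc : ContinuousOn (fun t => cross2 (γ t) (γ' t) / ((γ t).1 ^ 2 + (γ t).2 ^ 2))
      (Icc (0:ℝ) 1) := by
    apply ContinuousOn.div
    · simp only [cross2]
      exact ((continuous_fst.comp_continuousOn hγc).mul
          (continuous_snd.comp_continuousOn hcont)).sub
        ((continuous_snd.comp_continuousOn hγc).mul
          (continuous_fst.comp_continuousOn hcont))
    · exact ((continuous_fst.comp_continuousOn hγc).pow 2).add
        ((continuous_snd.comp_continuousOn hγc).pow 2)
    · exact fun t ht => ne_of_gt (hR t ht)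
  -- extension of B/R to all of ℝ
  obtain ⟨G, hGc, hGeq⟩ : ∃ G : ℝ → ℝ, Continuous G ∧ ∀ t ∈ Icc (0:ℝ) 1,
      G t = cross2 (γ t) (γ' t) / ((γ t).1 ^ 2 + (γ t).2 ^ 2) := by
    refine ⟨IccExtend zero_le_one ((Icc (0:ℝ) 1).restrict
      (fun t => cross2 (γ t) (γ' t) / ((γ t).1 ^ 2 + (γ t).2 ^ 2))), ?_, ?_⟩
    · exact Continuous.Icc_extend' (ContinuousOn.restrict hBRc)
    · intro t ht
      rw [IccExtend_of_mem _ _ ht]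
      rfl
  -- the angle function
  obtain ⟨θ, hθd, hθ0⟩ : ∃ θ : ℝ → ℝ, (∀ t, HasDerivAt θ (G t) t) ∧ θ 0 = ang p := by
    refine ⟨fun t => ang p + ∫ s in (0:ℝ)..t, G s, ?_, by simp⟩
    intro t
    exact ((hGc.integral_hasStrictDerivAt 0 t).hasDerivAt).const_add (ang p)
  have hθd' : ∀ t ∈ Icc (0:ℝ) 1, HasDerivAt θ
      (cross2 (γ t) (γ' t) / ((γ t).1 ^ 2 + (γ t).2 ^ 2)) t := by
    intro t ht
    have := hθd t
    rwa [hGeq t ht] at this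
  -- the log-radius function
  obtain ⟨m, hmd, hmval⟩ : ∃ m : ℝ → ℝ,
      (∀ t ∈ Icc (0:ℝ) 1, HasDerivAt m
        (dot2 (γ t) (γ' t) / ((γ t).1 ^ 2 + (γ t).2 ^ 2)) t) ∧
      (∀ t ∈ Icc (0:ℝ) 1, m t = Real.log (Real.sqrt ((γ t).1 ^ 2 + (γ t).2 ^ 2))) := by
    refine ⟨fun t => Real.log ((γ t).1 ^ 2 + (γ t).2 ^ 2) / 2, ?_, ?_⟩
    · intro t ht
      have hx := fstDeriv (hd t ht)
      have hy := sndDeriv (hd t ht)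
      have hRd : HasDerivAt (fun s => (γ s).1 ^ 2 + (γ s).2 ^ 2)
          (2 * dot2 (γ t) (γ' t)) t := by
        have := (hx.pow 2).add (hy.pow 2)
        refine this.congr_deriv ?_
        simp only [dot2]; ring
      have hlog := (Real.hasDerivAt_log (ne_of_gt (hR t ht))).comp t hRd
      have := hlog.div_const 2
      refine this.congr_deriv ?_
      have hRne := ne_of_gt (hR t ht)
      field_simp
    · intro t ht
      rw [Real.log_sqrt (le_of_lt (hR t ht))]
  -- key constancy claim
  have key : ∀ P Q : ℝ → ℝ, (∀ s, HasDerivAt P (-(Q s) * G s) s) →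
      (∀ s, HasDerivAt Q (P s * G s) s) →
      ∀ t ∈ Icc (0:ℝ) 1, ((γ t).1 * P t + (γ t).2 * Q t) * Real.exp (-(m t)) =
        ((γ 0).1 * P 0 + (γ 0).2 * Q 0) * Real.exp (-(m 0)) := by
    intro P Q hP hQ
    have hFd : ∀ t ∈ Icc (0:ℝ) 1, HasDerivAt
        (fun s => ((γ s).1 * P s + (γ s).2 * Q s) * Real.exp (-(m s))) 0 t := by
      intro t ht
      have hx := fstDeriv (hd t ht)
      have hy := sndDeriv (hd t ht)
      have hm := hmd t ht
      have hE : HasDerivAt (fun s => Real.exp (-(m s)))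
          (Real.exp (-(m t)) * -(dot2 (γ t) (γ' t) / ((γ t).1 ^ 2 + (γ t).2 ^ 2))) t :=
        (Real.hasDerivAt_exp _).comp t hm.neg
      have hin := (hx.mul (hP t)).add (hy.mul (hQ t))
      have htot := hin.mul hE
      refine htot.congr_deriv ?_
      rw [hGeq t ht]
      have hRne := ne_of_gt (hR t ht)
      simp only [dot2, cross2]
      field_simp
      simp only [Pi.add_apply, Pi.mul_apply]
      ring
    intro t ht
    have hFc : ContinuousOn
        (fun s => ((γ s).1 * P s + (γ s).2 * Q s) * Real.exp (-(m s))) (Icc 0 1) :=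
      fun s hs => (hFd s hs).continuousAt.continuousWithinAt
    exact constant_of_has_deriv_right_zero hFc
      (fun s hs => (hFd s (Ico_subset_Icc_self hs)).hasDerivWithinAt) t ht
  -- basic data at the endpoints
  have hp0 : 0 < p.1 ^ 2 + p.2 ^ 2 := by have := hR 0 h01; rwa [h0] at this
  obtain ⟨r, hrdef⟩ : ∃ r : ℝ, r = Real.sqrt (p.1 ^ 2 + p.2 ^ 2) := ⟨_, rfl⟩
  have hr : 0 < r := hrdef ▸ Real.sqrt_pos.2 hp0
  have hpx : p.1 = r * Real.cos (ang p) := by rw [hrdef]; exact (polar p hp0).1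
  have hpy : p.2 = r * Real.sin (ang p) := by rw [hrdef]; exact (polar p hp0).2
  have hm0 : m 0 = Real.log r := by rw [hmval 0 h01, h0, hrdef]
  have hm1 : m 1 = Real.log a := by
    rw [hmval 1 h11, h1]
    norm_num
    rw [Real.sqrt_sq ha.le]
  -- apply key to (cos θ, sin θ): get cos (θ 1) = 1
  have hCd : ∀ s : ℝ, HasDerivAt (fun u => Real.cos (θ u)) (-(Real.sin (θ s)) * G s) s :=
    fun s => by exact ((Real.hasDerivAt_cos (θ s)).comp s (hθd s)).congr_deriv (by ring)
  have hSd : ∀ s : ℝ, HasDerivAt (fun u => Real.sin (θ u)) (Real.cos (θ s) * G s) s :=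
    fun s => by exact ((Real.hasDerivAt_sin (θ s)).comp s (hθd s)).congr_deriv (by ring)
  have hv := key (fun u => Real.cos (θ u)) (fun u => Real.sin (θ u)) hCd hSd 1 h11
  have hcos1 : Real.cos (θ 1) = 1 := by
    beta_reduce at hv
    rw [h1, h0, hθ0, hm0, hm1, Real.exp_neg, Real.exp_log ha, Real.exp_neg,
      Real.exp_log hr, hpx, hpy] at hv
    have htrig := Real.sin_sq_add_cos_sq (ang p)
    field_simp at hv
    nlinarith [htrig, hv, hr, ha]
  obtain ⟨k, hk⟩ := (Real.cos_eq_one_iff (θ 1)).1 hcos1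
  -- monotonicity of Z m ± θ
  have mono : ∀ σ : ℝ, σ = 1 ∨ σ = -1 → Z * m 0 + σ * θ 0 < Z * m 1 + σ * θ 1 := by
    intro σ hσ
    have hFd : ∀ t ∈ Icc (0:ℝ) 1, HasDerivAt (fun s => Z * m s + σ * θ s)
        (Z * (dot2 (γ t) (γ' t) / ((γ t).1 ^ 2 + (γ t).2 ^ 2)) + σ * G t) t :=
      fun t ht => ((hmd t ht).const_mul Z).add ((hθd t).const_mul σ)
    have hmono : StrictMonoOn (fun s => Z * m s + σ * θ s) (Icc (0:ℝ) 1) := by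
      apply strictMonoOn_of_deriv_pos (convex_Icc (0:ℝ) 1)
      · exact fun t ht => (hFd t ht).continuousAt.continuousWithinAt
      · intro x hx
        rw [interior_Icc] at hx
        have hx' := Ioo_subset_Icc_self hx
        rw [(hFd x hx').deriv, hGeq x hx']
        have hApos := hdot x hx'
        have hBx := hB x hx'
        have hRx := hR x hx'
        have hnum : 0 < Z * dot2 (γ x) (γ' x) + σ * cross2 (γ x) (γ' x) := by
          rcases hσ with h | h <;> subst h
          · nlinarith [neg_abs_le (cross2 (γ x) (γ' x))]
          · nlinarith [le_abs_self (cross2 (γ x) (γ' x))]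
        have heq : Z * (dot2 (γ x) (γ' x) / ((γ x).1 ^ 2 + (γ x).2 ^ 2))
            + σ * (cross2 (γ x) (γ' x) / ((γ x).1 ^ 2 + (γ x).2 ^ 2))
            = (Z * dot2 (γ x) (γ' x) + σ * cross2 (γ x) (γ' x))
              / ((γ x).1 ^ 2 + (γ x).2 ^ 2) := by ring
        rw [heq]
        exact div_pos hnum hRx
    exact hmono h01 h11 zero_lt_one
  have hmono1 := mono 1 (Or.inl rfl)
  have hmono2 := mono (-1) (Or.inr rfl)
  rw [hθ0, hm0, hm1, ← hk] at hmono1 hmono2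
  -- conclude |ang p| < Z * (log a - log r)
  have habsφ : |ang p| ≤ Real.pi := Complex.abs_arg_le_pi _
  have hReal.pi : 0 < Real.pi := Real.pi_pos
  have hkey : |ang p| < Z * (Real.log a - Real.log r) := by
    rcases eq_or_ne k 0 with hk0 | hk0
    · subst hk0
      push_cast at hmono1 hmono2
      rw [abs_lt]
      constructor <;> nlinarith [hmono1, hmono2]
    · have hk1 : (1:ℝ) ≤ |(k:ℝ)| := by
        rw [← Int.cast_abs]
        exact_mod_cast Int.one_le_abs hk0
      have habs2 : |(k:ℝ) * (2 * Real.pi)| = |(k:ℝ)| * (2 * Real.pi) := by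
        rw [abs_mul, abs_of_pos (by linarith [Real.pi_pos] : (0:ℝ) < 2 * Real.pi)]
      have htri : |(k:ℝ) * (2 * Real.pi)| - |ang p| ≤ |(k:ℝ) * (2 * Real.pi) - ang p| :=
        (abs_sub_abs_le_abs_sub _ _)
      have hboth : |(k:ℝ) * (2 * Real.pi) - ang p| < Z * (Real.log a - Real.log r) := by
        rw [abs_lt]
        constructor <;> nlinarith [hmono1, hmono2]
      nlinarith [habsφ, hk1, hReal.pi, htri, hboth, habs2]
  -- finish
  have hlog : Real.log r < Real.log a + -|ang p| / Z := by
    rw [neg_div]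
    have : |ang p| / Z < Real.log a - Real.log r := by
      rw [div_lt_iff₀ hZ]
      nlinarith [hkey]
    linarith
  have hfin := Real.exp_lt_exp.2 hlog
  rw [Real.exp_log hr, Real.exp_add, Real.exp_log ha] at hfin
  rw [← hZdef]
  exact hrdef ▸ hfin


end Stmt7Aux

/-- in the yarmulke, the chronological past of `q = (a,0)` (`0 < a < ε`)
is the open heart-shaped region bounded by the two past-directed null spirals:
`I⁻(q) = {p ∈ N : |p| < a e^{−|φ_p|/Z}}` with `Z = √(ζ−1)`. -/
theorem stmt7 (ζ ε a : ℝ) (hζ : 1 < ζ) (hε : 0 < ε) (ha : 0 < a) (haε : a < ε) :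
    IminusY ζ ε (a, 0) =
      {p ∈ NY ε |
        Real.sqrt (p.1 ^ 2 + p.2 ^ 2) < a * Real.exp (-|ang p| / Real.sqrt (ζ - 1))} := by
  ext p
  simp only [IminusY, chronY, TimelikeY, Set.mem_setOf_eq]
  constructor
  · rintro ⟨hpN, γ, γ', ⟨hd, hcont, hN, hg, hdot⟩, h0, h1⟩
    exact ⟨hpN, Stmt7Aux.forward ζ ε a hζ ha p γ γ' hd hcont hN hg hdot h0 h1⟩
  · rintro ⟨hpN, hlt⟩
    obtain ⟨γ, γ', htl, h0, h1⟩ := Stmt7Aux.construct ζ ε a hζ hε ha haε p hpN hlt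
    exact ⟨hpN, γ, γ', htl, h0, h1⟩
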